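/- Suppose g : ℝ → ℝ is strictly increasing with g(x)−x being 1-periodic, and g satisfies the cross-ratio inequality with respect to a cross-ratio modulus χ with bound Q (i.e. for every allowable configuration of quadruples (a_i,b_i,c_i,d_i), i=1,…,n, the product of χ(g(a_i),g(b_i),g(c_i),g(d_i))/χ(a_i,b_i,c_i,d_i) is at most Q). Then for any configuration of quadruples with intersection number k (every point of ℝ is contained, modulo 1, in at most k of the intervals (a_i,d_i)), the product ∏_{i=1}^n χ(g(a_i),g(b_i),g(c_i),g(d_i))/χ(a_i,b_i,c_i,d_i) is at most Q^{2k}. -/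

import Mathlib

open Finset Set

lemma greedy_coloring {n : ℕ} (k : ℕ) (hk : 1 ≤ k) (A D : Fin n → ℝ) :
    ∀ T : Finset (Fin n),
    (∀ x : ℝ, (T.filter (fun i => x ∈ Set.Ioo (A i) (D i))).card ≤ k) →
    ∃ f : Fin n → Fin k, ∀ i ∈ T, ∀ j ∈ T, i ≠ j → f i = f j →
      Disjoint (Set.Ioo (A i) (D i)) (Set.Ioo (A j) (D j)) := by
  classical
  intro T
  induction T using Finset.strongInduction with
  | _ T ih =>
  intro hload
  rcases T.eq_empty_or_nonempty with rfl | hT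
  · exact ⟨fun _ => ⟨0, hk⟩, by simp⟩
  obtain ⟨i0, hi0T, hmax⟩ := T.exists_max_image A hT
  have hsub : T.erase i0 ⊂ T := Finset.erase_ssubset hi0T
  obtain ⟨f', hf'⟩ := ih (T.erase i0) hsub (fun x =>
    le_trans (Finset.card_le_card (Finset.filter_subset_filter _ hsub.subset)) (hload x))
  set C : Finset (Fin n) := (T.erase i0).filter
    (fun j => ¬ Disjoint (Set.Ioo (A j) (D j)) (Set.Ioo (A i0) (D i0))) with hC
  have hi0C : i0 ∉ C := fun h => (Finset.mem_erase.mp (Finset.mem_filter.mp h).1).1 rfl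
  have hCcard : C.card < k := by
    rcases C.eq_empty_or_nonempty with he | hCne
    · rw [he]; simp; omega
    · have hsne : (insert i0 C).Nonempty := ⟨i0, Finset.mem_insert_self _ _⟩
      have hDs : ∀ j ∈ insert i0 C, A i0 < D j := by
        intro j hj
        rcases Finset.mem_insert.mp hj with rfl | hj
        · obtain ⟨j', hj'⟩ := hCne
          obtain ⟨y, hy1, hy2⟩ := Set.not_disjoint_iff.mp (Finset.mem_filter.mp hj').2
          exact lt_trans hy2.1 hy2.2
        · obtain ⟨y, hy1, hy2⟩ := Set.not_disjoint_iff.mp (Finset.mem_filter.mp hj).2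
          exact lt_trans hy2.1 hy1.2
      set m := (insert i0 C).inf' hsne D with hm
      have hmlt : A i0 < m := (Finset.lt_inf'_iff hsne).mpr hDs
      set x := (A i0 + m) / 2 with hx
      have hx1 : A i0 < x := by rw [hx]; linarith
      have hx2 : ∀ j ∈ insert i0 C, x < D j := by
        intro j hj
        have h2 : m ≤ D j := Finset.inf'_le D hj
        rw [hx]; linarith
      have hsT : insert i0 C ⊆ T := by
        intro j hj
        rcases Finset.mem_insert.mp hj with rfl | hj
        · exact hi0T
        · exact Finset.mem_of_mem_erase (Finset.mem_filter.mp hj).1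
      have hss : insert i0 C ⊆ T.filter (fun i => x ∈ Set.Ioo (A i) (D i)) := by
        intro j hj
        exact Finset.mem_filter.mpr ⟨hsT hj,
          ⟨lt_of_le_of_lt (hmax j (hsT hj)) hx1, hx2 j hj⟩⟩
      have hcard := le_trans (Finset.card_le_card hss) (hload x)
      rw [Finset.card_insert_of_notMem hi0C] at hcard
      omega
  obtain ⟨cfr, hcfr⟩ : ∃ cfr : Fin k, cfr ∉ C.image f' := by
    by_contra h
    push_neg at h
    have h2 : (C.image f') = Finset.univ := Finset.eq_univ_iff_forall.mpr h
    have h3 : (C.image f').card ≤ C.card := Finset.card_image_le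
    rw [h2, Finset.card_univ, Fintype.card_fin] at h3
    omega
  refine ⟨Function.update f' i0 cfr, ?_⟩
  intro i hiT j hjT hij hfij
  rcases eq_or_ne i i0 with rfl | hi
  · rw [Function.update_self, Function.update_of_ne (fun h => hij h.symm)] at hfij
    by_contra hnd
    have hjC : j ∈ C := Finset.mem_filter.mpr
      ⟨Finset.mem_erase.mpr ⟨fun h => hij h.symm, hjT⟩, fun h => hnd h.symm⟩
    have hmem : f' j ∈ C.image f' := Finset.mem_image_of_mem f' hjC
    rw [← hfij] at hmem
    exact hcfr hmem
  rcases eq_or_ne j i0 with rfl | hj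
  · rw [Function.update_of_ne hi, Function.update_self] at hfij
    by_contra hnd
    have hiC : i ∈ C := Finset.mem_filter.mpr ⟨Finset.mem_erase.mpr ⟨hi, hiT⟩, hnd⟩
    have hmem : f' i ∈ C.image f' := Finset.mem_image_of_mem f' hiC
    rw [hfij] at hmem
    exact hcfr hmem
  · rw [Function.update_of_ne hi, Function.update_of_ne hj] at hfij
    exact hf' i (Finset.mem_erase.mpr ⟨hi, hiT⟩) j (Finset.mem_erase.mpr ⟨hj, hjT⟩) hij hfij


/-- Lemma 1.1 of Świątek: Suppose `g : ℝ → ℝ` is strictly increasing with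
`g(x) − x` 1-periodic, `χ` is a cross-ratio modulus, and `g` satisfies the cross-ratio
inequality with respect to `χ` with bound `Q` (over allowable configurations: the intervals
`(a_i, d_i)` are pairwise disjoint modulo 1 and `d_i − a_i < 1`).  Then for any configuration
of quadruples with intersection number at most `k` (every real `x` lies, modulo 1, in at most
`k` of the intervals `(a_i, d_i)`), the product of the distortions of `χ` is at most `Q^{2k}`. -/
theorem stmt_18 (χ : ℝ → ℝ → ℝ → ℝ → ℝ) (g : ℝ → ℝ) (Q : ℝ) (hQ : 1 ≤ Q)
    (hg : StrictMono g) (hgper : ∀ x, g (x + 1) = g x + 1)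
    (hχnonneg : ∀ a b c d : ℝ, a ≤ b → b ≤ c → c ≤ d → 0 ≤ χ a b c d)
    (hχlow : ∃ Cst : ℝ, 0 < Cst ∧ ∀ a b c d : ℝ, a ≤ b → b ≤ c → c ≤ d →
      ((b - a) * (d - c)) / ((c - a) * (d - b)) ≥ 1 / 4 → Cst ≤ χ a b c d)
    (hχsmall : ∀ ε : ℝ, 0 < ε → ∃ δ : ℝ, 0 < δ ∧ ∀ a b c d : ℝ, a ≤ b → b ≤ c → c ≤ d →
      ((b - a) * (d - c)) / ((c - a) * (d - b)) < δ → χ a b c d < ε)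
    (hcri : ∀ (n : ℕ) (a b c d : Fin n → ℝ),
      (∀ i, a i ≤ b i ∧ b i ≤ c i ∧ c i ≤ d i ∧ d i - a i < 1) →
      (∀ i j, i ≠ j → ∀ m : ℤ,
        Disjoint (Set.Ioo (a i) (d i)) (Set.Ioo (a j + (m : ℝ)) (d j + (m : ℝ)))) →
      (Finset.univ.prod fun i =>
        χ (g (a i)) (g (b i)) (g (c i)) (g (d i)) / χ (a i) (b i) (c i) (d i)) ≤ Q) :
    ∀ (k n : ℕ) (a b c d : Fin n → ℝ),
      (∀ i, a i ≤ b i ∧ b i ≤ c i ∧ c i ≤ d i ∧ d i - a i < 1) →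
      (∀ x : ℝ, Nat.card {i : Fin n // ∃ m : ℤ, x + (m : ℝ) ∈ Set.Ioo (a i) (d i)} ≤ k) →
      (Finset.univ.prod fun i =>
        χ (g (a i)) (g (b i)) (g (c i)) (g (d i)) / χ (a i) (b i) (c i) (d i)) ≤ Q ^ (2 * k) := by
  classical
  intro k n a b c d hcfg hload
  have hfac : ∀ i, 0 ≤ χ (g (a i)) (g (b i)) (g (c i)) (g (d i)) / χ (a i) (b i) (c i) (d i) := by
    intro i
    obtain ⟨h1, h2, h3, _⟩ := hcfg i
    exact div_nonneg
      (hχnonneg _ _ _ _ (hg.monotone h1) (hg.monotone h2) (hg.monotone h3))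
      (hχnonneg _ _ _ _ h1 h2 h3)
  have hloadF : ∀ x : ℝ,
      (Finset.univ.filter (fun i : Fin n => ∃ m : ℤ, x + (m : ℝ) ∈ Set.Ioo (a i) (d i))).card ≤ k := by
    intro x
    have h := hload x
    rwa [Nat.card_eq_fintype_card, Fintype.card_subtype] at h
  rcases Nat.eq_zero_or_pos k with rfl | hk
  · -- k = 0 : all intervals degenerate
    rcases Nat.eq_zero_or_pos n with rfl | hn
    · simp
    · set i0 : Fin n := ⟨0, hn⟩
      obtain ⟨h1, h2, h3, _⟩ := hcfg i0
      have had : a i0 = d i0 := by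
        by_contra h
        have hlt : a i0 < d i0 := lt_of_le_of_ne (le_trans h1 (le_trans h2 h3)) h
        have hx : ((a i0 + d i0) / 2 + ((0 : ℤ) : ℝ)) ∈ Set.Ioo (a i0) (d i0) := by
          constructor <;> push_cast <;> linarith
        have hpos : 0 < Nat.card {i : Fin n // ∃ m : ℤ, (a i0 + d i0) / 2 + (m : ℝ) ∈ Set.Ioo (a i) (d i)} := by
          have : Nonempty {i : Fin n // ∃ m : ℤ, (a i0 + d i0) / 2 + (m : ℝ) ∈ Set.Ioo (a i) (d i)} :=
            ⟨⟨i0, 0, hx⟩⟩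
          exact Nat.card_pos
        have := hload ((a i0 + d i0) / 2)
        omega
      have hb : b i0 = a i0 := le_antisymm (by linarith) h1
      have hc : c i0 = a i0 := le_antisymm (by linarith) (by linarith)
      have hd : d i0 = a i0 := had.symm
      have hden : χ (a i0) (b i0) (c i0) (d i0) = 0 := by
        rw [hb, hc, hd]
        refine le_antisymm ?_ (hχnonneg _ _ _ _ le_rfl le_rfl le_rfl)
        by_contra h
        push_neg at h
        obtain ⟨δ, hδ, hδ'⟩ := hχsmall _ h
        have := hδ' (a i0) (a i0) (a i0) (a i0) le_rfl le_rfl le_rfl (by simp [hδ])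
        exact lt_irrefl _ this
      have hzero : (Finset.univ.prod fun i =>
          χ (g (a i)) (g (b i)) (g (c i)) (g (d i)) / χ (a i) (b i) (c i) (d i)) = 0 :=
        Finset.prod_eq_zero (Finset.mem_univ i0) (by rw [hden, div_zero])
      rw [hzero]
      positivity
  · -- main case k ≥ 1
    set A : Fin n → ℝ := fun i => a i - (⌊a i⌋ : ℝ) with hA
    set D : Fin n → ℝ := fun i => d i - (⌊a i⌋ : ℝ) with hD
    have hAD : ∀ (i : Fin n) (x : ℝ), x ∈ Set.Ioo (A i) (D i) ↔
        x + (⌊a i⌋ : ℝ) ∈ Set.Ioo (a i) (d i) := by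
      intro i x
      simp only [hA, hD, Set.mem_Ioo]
      constructor <;> rintro ⟨u, v⟩ <;> constructor <;> linarith
    have hA0 : ∀ i, 0 ≤ A i := by
      intro i; simp only [hA]; linarith [Int.floor_le (a i)]
    have hA1 : ∀ i, A i < 1 := by
      intro i; simp only [hA]; linarith [Int.lt_floor_add_one (a i)]
    set S : Finset (Fin n) := Finset.univ.filter (fun i => (1 : ℝ) ∈ Set.Ioo (A i) (D i)) with hS
    have hDle : ∀ i, i ∉ S → D i ≤ 1 := by
      intro i hi
      by_contra h
      push_neg at h
      exact hi (Finset.mem_filter.mpr ⟨Finset.mem_univ _, ⟨hA1 i, h⟩⟩)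
    have hload' : ∀ x : ℝ,
        ((Sᶜ).filter (fun i => x ∈ Set.Ioo (A i) (D i))).card ≤ k := by
      intro x
      refine le_trans (Finset.card_le_card ?_) (hloadF x)
      intro i hi
      rcases Finset.mem_filter.mp hi with ⟨_, hx⟩
      exact Finset.mem_filter.mpr ⟨Finset.mem_univ _, ⟨⌊a i⌋, (hAD i x).mp hx⟩⟩
    obtain ⟨f, hf⟩ := greedy_coloring k hk A D Sᶜ hload'
    have hScard : S.card ≤ k := by
      refine le_trans (Finset.card_le_card ?_) (hloadF 0)
      intro i hi
      rcases Finset.mem_filter.mp hi with ⟨_, hx⟩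
      obtain ⟨u, v⟩ := (hAD i 1).mp hx
      refine Finset.mem_filter.mpr ⟨Finset.mem_univ _, ⟨⌊a i⌋ + 1, ?_⟩⟩
      constructor <;> push_cast <;> linarith
    obtain ⟨e⟩ : Nonempty (↥S ↪ Fin k) := by
      apply Function.Embedding.nonempty_of_card_le
      rwa [Fintype.card_coe, Fintype.card_fin]
    set F : Fin n → (Fin k ⊕ Fin k) :=
      fun i => if h : i ∈ S then Sum.inr (e ⟨i, h⟩) else Sum.inl (f i) with hF
    have hkey : ∀ i j, i ≠ j → F i = F j → ∀ m : ℤ,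
        Disjoint (Set.Ioo (a i) (d i)) (Set.Ioo (a j + (m : ℝ)) (d j + (m : ℝ))) := by
      intro i j hij hFij m
      by_cases hi : i ∈ S <;> by_cases hj : j ∈ S <;>
        simp only [hF, dif_pos, dif_neg, hi, hj, dite_true, dite_false] at hFij
      · exact absurd (Subtype.ext_iff.mp (e.injective (Sum.inr.inj hFij))) hij
      · exact absurd hFij (by simp)
      · exact absurd hFij (by simp)
      · -- both not in S
        have hfij : f i = f j := Sum.inl.inj hFij
        have hdisj := hf i (Finset.mem_compl.mpr hi) j (Finset.mem_compl.mpr hj) hij hfij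
        rw [Set.disjoint_left]
        intro x hx1 hx2
        have h1 : x - (⌊a i⌋ : ℝ) ∈ Set.Ioo (A i) (D i) := by
          rw [hAD i]
          simpa using hx1
        set m' : ℤ := m + ⌊a j⌋ - ⌊a i⌋ with hm'
        have h2 : A j + (m' : ℝ) < x - (⌊a i⌋ : ℝ) ∧ x - (⌊a i⌋ : ℝ) < D j + (m' : ℝ) := by
          obtain ⟨u, v⟩ := hx2
          simp only [hA, hD, hm']
          push_cast
          constructor <;> linarith
        obtain ⟨h1a, h1b⟩ := h1
        obtain ⟨h2a, h2b⟩ := h2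
        rcases lt_trichotomy m' 0 with hm | hm | hm
        · have hmr : (m' : ℝ) ≤ -1 := by
            have h9 : m' + 1 ≤ 0 := Int.lt_iff_add_one_le.mp hm
            have h10 : ((m' + 1 : ℤ) : ℝ) ≤ 0 := by exact_mod_cast h9
            push_cast at h10
            linarith
          have := hDle j hj
          linarith [hA0 i]
        · rw [hm] at h2a h2b
          push_cast at h2a h2b
          exact Set.disjoint_left.mp hdisj ⟨h1a, h1b⟩ (by constructor <;> linarith)
        · have hmr : (1 : ℝ) ≤ (m' : ℝ) := by exact_mod_cast hm
          have := hDle i hi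
          linarith [hA0 j]
    -- fiberwise product bound
    have hfiber : ∀ cs : Fin k ⊕ Fin k,
        ((Finset.univ.filter (fun i => F i = cs)).prod fun i =>
          χ (g (a i)) (g (b i)) (g (c i)) (g (d i)) / χ (a i) (b i) (c i) (d i)) ≤ Q := by
      intro cs
      set s : Finset (Fin n) := Finset.univ.filter (fun i => F i = cs) with hsdef
      set e2 : ↥s ≃ Fin s.card := s.equivFin with he2
      have hne : ∀ (t u : Fin s.card), t ≠ u →
          (↑(e2.symm t) : Fin n) ≠ (↑(e2.symm u) : Fin n) := by
        intro t u htu h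
        exact htu (e2.symm.injective (Subtype.ext h))
      have hFs : ∀ t : Fin s.card, F ↑(e2.symm t) = cs := by
        intro t
        exact (Finset.mem_filter.mp (e2.symm t).2).2
      have happ := hcri s.card (fun t => a ↑(e2.symm t)) (fun t => b ↑(e2.symm t))
        (fun t => c ↑(e2.symm t)) (fun t => d ↑(e2.symm t))
        (fun t => hcfg _)
        (fun t u htu m => hkey _ _ (hne t u htu) ((hFs t).trans (hFs u).symm) m)
      calc (s.prod fun i => χ (g (a i)) (g (b i)) (g (c i)) (g (d i)) / χ (a i) (b i) (c i) (d i))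
          = ∏ x : ↥s, χ (g (a ↑x)) (g (b ↑x)) (g (c ↑x)) (g (d ↑x)) / χ (a ↑x) (b ↑x) (c ↑x) (d ↑x) :=
            (Finset.prod_coe_sort s _).symm
        _ = ∏ t : Fin s.card, χ (g (a ↑(e2.symm t))) (g (b ↑(e2.symm t))) (g (c ↑(e2.symm t)))
              (g (d ↑(e2.symm t))) / χ (a ↑(e2.symm t)) (b ↑(e2.symm t)) (c ↑(e2.symm t)) (d ↑(e2.symm t)) :=
            (Equiv.prod_comp e2.symm _).symm
        _ ≤ Q := happ
    calc (Finset.univ.prod fun i =>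
            χ (g (a i)) (g (b i)) (g (c i)) (g (d i)) / χ (a i) (b i) (c i) (d i))
        = ∏ cs : Fin k ⊕ Fin k, ((Finset.univ.filter (fun i => F i = cs)).prod fun i =>
            χ (g (a i)) (g (b i)) (g (c i)) (g (d i)) / χ (a i) (b i) (c i) (d i)) :=
          (Finset.prod_fiberwise _ _ _).symm
      _ ≤ ∏ _cs : Fin k ⊕ Fin k, Q :=
          Finset.prod_le_prod (fun cs _ => Finset.prod_nonneg fun i _ => hfac i)
            (fun cs _ => hfiber cs)
      _ = Q ^ (2 * k) := by
          rw [Finset.prod_const, Finset.card_univ, Fintype.card_sum, Fintype.card_fin, two_mul]
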